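/- Let κ, σ, ρ, T be real numbers with σ ≠ 0 and T > 0, let u ∈ ℂ, and let η ∈ ℂ satisfy η² = (κ + uσρ)² − σ²u(u+1) and η ≠ 0. Define D(t) = η(e^{η(T−t)} + 1) + (κ + uσρ)(e^{η(T−t)} − 1), assume D(t) ≠ 0 for all t ∈ [0, T], and set Ψ(t) = 2η e^{η(T−t)/2}/D(t). Then the function V(t) = (σ²/2)(e^{η(T−t)} − 1)/D(t) satisfies V(T) = 0 and, for every t ∈ [0, T], V is differentiable at t with V′(t) = −(σ²/4)Ψ(t)². -/

import Mathlib

open Complex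

theorem heston_V_solution (κ σ ρ T : ℝ) (hσ : σ ≠ 0) (hT : 0 < T)
    (u η : ℂ) (hη2 : η ^ 2 = ((κ : ℂ) + u * σ * ρ) ^ 2 - (σ : ℂ) ^ 2 * u * (u + 1))
    (hη : η ≠ 0)
    (D : ℝ → ℂ)
    (hD : ∀ t : ℝ, D t = η * (Complex.exp (η * (T - t)) + 1) +
      ((κ : ℂ) + u * σ * ρ) * (Complex.exp (η * (T - t)) - 1))
    (hD0 : ∀ t ∈ Set.Icc (0 : ℝ) T, D t ≠ 0)
    (Ψ : ℝ → ℂ)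
    (hΨ : ∀ t : ℝ, Ψ t = 2 * η * Complex.exp (η * (T - t) / 2) / D t)
    (V : ℝ → ℂ)
    (hV : ∀ t : ℝ, V t = (σ : ℂ) ^ 2 / 2 * (Complex.exp (η * (T - t)) - 1) / D t) :
    V T = 0 ∧
      ∀ t ∈ Set.Icc (0 : ℝ) T,
        HasDerivAt V (-((σ : ℂ) ^ 2 / 4) * (Ψ t) ^ 2) t := by
  constructor
  · rw [hV]; simp
  · intro t ht
    have hDt := hD0 t ht
    set β : ℂ := (κ : ℂ) + u * σ * ρ with hβ
    have h1 : HasDerivAt (fun s : ℝ => ((s : ℂ))) 1 t := by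
      simpa using (hasDerivAt_id t).ofReal_comp
    have hE : HasDerivAt (fun s : ℝ => Complex.exp (η * (T - s)))
        (Complex.exp (η * (T - t)) * (-η)) t := by
      have h2 : HasDerivAt (fun s : ℝ => η * ((T : ℂ) - s)) (-η) t := by
        have := ((hasDerivAt_const t ((T : ℂ))).sub h1).const_mul η
        simpa using this
      simpa using h2.cexp
    have hfe : D = fun s : ℝ => η * (Complex.exp (η * (T - s)) + 1) +
        β * (Complex.exp (η * (T - s)) - 1) := funext hD
    have hDder : HasDerivAt D
        (η * (Complex.exp (η * (T - t)) * (-η)) + β * (Complex.exp (η * (T - t)) * (-η))) t := by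
      rw [hfe]
      exact ((hE.add_const 1).const_mul η).add ((hE.sub_const 1).const_mul β)
    have hVeq : V = fun s : ℝ => (σ : ℂ) ^ 2 / 2 * (Complex.exp (η * (T - s)) - 1) / D s :=
      funext hV
    rw [hVeq]
    have hnum : HasDerivAt (fun s : ℝ => (σ : ℂ) ^ 2 / 2 * (Complex.exp (η * (T - s)) - 1))
        ((σ : ℂ) ^ 2 / 2 * (Complex.exp (η * (T - t)) * (-η))) t := (hE.sub_const 1).const_mul _
    have key := hnum.div hDder hDt
    convert key using 1
    case e'_4 => rfl
    case e'_8 => rfl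
    have hDformula : D t = η * (Complex.exp (η * (T - t)) + 1) +
        β * (Complex.exp (η * (T - t)) - 1) := hD t
    have hDne : η * (Complex.exp (η * (T - t)) + 1) +
        β * (Complex.exp (η * (T - t)) - 1) ≠ 0 := hDformula ▸ hDt
    have hexp : Complex.exp (η * (T - t)) = Complex.exp (η * (T - t) / 2) ^ 2 := by
      rw [sq, ← Complex.exp_add]; ring_nf
    rw [hΨ, hDformula, hexp]
    field_simp
    ring
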